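/- Let v1, v2 > 0 and b ∈ (0, 1). A strategy profile (X, Y) with E(X) = 1 and E(Y) = b is a Nash equilibrium of the two-player all-pay auction with valuations (v1, v2) if and only if v1 ≥ v2 = 2, b ≤ 4/v1, X = U_O^1, and Y = (1−b)·δ_0 + b·(λ·U_O^1 + (1−λ)·U_E^1) for some λ ∈ [0, 1] with 4/(b·v1) − 2/b + 1 ≤ λ ≤ 4/(b·v1) − 1. In this case the equilibrium payoffs are P_{v1}(X, Y) = (v1/2)·(2 − b) − 1 and P_{v2}(Y, X) = 0. -/

import Mathlib

open scoped BigOperators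

/-- A (mixed) strategy: a probability distribution on the nonnegative
integers with finite expectation. -/
structure Strategy where
  p : ℕ → ℝ
  nonneg : ∀ n, 0 ≤ p n
  total : HasSum p 1
  finExp : Summable fun n : ℕ => (n : ℝ) * p n

namespace Strategy

/-- Expectation of a strategy. -/
noncomputable def exp (ξ : Strategy) : ℝ := ∑' n : ℕ, (n : ℝ) * ξ.p n

end Strategy

/-- Probability that an observation from `ξ` strictly exceeds an independent
observation from `η`. -/
noncomputable def prGT (ξ η : Strategy) : ℝ :=
  ∑' n, ξ.p n * ∑ k ∈ Finset.range n, η.p k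

/-- Probability that independent observations from `ξ` and `η` are equal. -/
noncomputable def prEq (ξ η : Strategy) : ℝ := ∑' n, ξ.p n * η.p n

/-- Expected all-pay auction payoff of a player with valuation `v` playing `ξ`
against `η`:  `v·Pr(X > Y) + (v/2)·Pr(X = Y) − E(X)`. -/
noncomputable def payoff (v : ℝ) (ξ η : Strategy) : ℝ :=
  v * prGT ξ η + v / 2 * prEq ξ η - ξ.exp

/-- Nash equilibrium of the two-player all-pay auction with valuations `(v1, v2)`. -/
def IsNashAPA (v1 v2 : ℝ) (X Y : Strategy) : Prop :=
  (∀ X' : Strategy, payoff v1 X' Y ≤ payoff v1 X Y) ∧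
  (∀ Y' : Strategy, payoff v2 Y' X ≤ payoff v2 Y X)

/-- `H(ξ, η) = Pr(X > Y) − Pr(X < Y)`. -/
noncomputable def Hval (ξ η : Strategy) : ℝ := prGT ξ η - prGT η ξ

/-- Nash equilibrium of the discrete General Lotto game `Γ(b1, b2)`. -/
def IsNashLotto (b1 b2 : ℝ) (X Y : Strategy) : Prop :=
  X.exp = b1 ∧ Y.exp = b2 ∧
  (∀ X' : Strategy, X'.exp = b1 → Hval X' Y ≤ Hval X Y) ∧
  (∀ Y' : Strategy, Y'.exp = b2 → Hval Y' X ≤ Hval Y X)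

/-- `U_O^m`: uniform distribution on the odd numbers `{1, 3, …, 2m−1}` (as a pmf). -/
noncomputable def UO (m : ℕ) : ℕ → ℝ := fun n =>
  if Odd n ∧ n < 2 * m then (m : ℝ)⁻¹ else 0

/-- `U_E^m`: uniform distribution on the even numbers `{0, 2, …, 2m}` (as a pmf). -/
noncomputable def UE (m : ℕ) : ℕ → ℝ := fun n =>
  if Even n ∧ n ≤ 2 * m then ((m : ℝ) + 1)⁻¹ else 0

/-- `U_{O↑1}^m`: uniform distribution on the even numbers `{2, 4, …, 2m−2}` (as a pmf). -/
noncomputable def UOup (m : ℕ) : ℕ → ℝ := fun n =>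
  if Even n ∧ 0 < n ∧ n ≤ 2 * m - 2 then ((m : ℝ) - 1)⁻¹ else 0

/-- `δ_j`: the point mass at `j` (as a pmf). -/
noncomputable def deltaFn (j : ℕ) : ℕ → ℝ := fun n => if n = j then 1 else 0

/-- `W_j^m = (1/(2m))·δ_0 + Σ_{i=1}^{j−1}(1/m)·δ_{2i} + (1/(2m))·δ_{2j}
      + Σ_{i=j+1}^{m}(1/m)·δ_{2i−1}` (as a pmf). -/
noncomputable def Wfn (j m : ℕ) : ℕ → ℝ := fun n =>
  if n = 0 ∨ n = 2 * j then (2 * (m : ℝ))⁻¹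
  else if Even n ∧ n < 2 * j then (m : ℝ)⁻¹
  else if Odd n ∧ 2 * j < n ∧ n < 2 * m then (m : ℝ)⁻¹
  else 0

/-- `V_j^m = Σ_{i=1}^{j−1}(2/(2m+1))·δ_{2i−1} + (1/(2m+1))·δ_{2j−1}
      + Σ_{i=j}^{m}(2/(2m+1))·δ_{2i}` (as a pmf). -/
noncomputable def Vfn (j m : ℕ) : ℕ → ℝ := fun n =>
  if n = 2 * j - 1 then (2 * (m : ℝ) + 1)⁻¹
  else if Odd n ∧ n < 2 * j - 1 then 2 * (2 * (m : ℝ) + 1)⁻¹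
  else if Even n ∧ 2 * j ≤ n ∧ n ≤ 2 * m then 2 * (2 * (m : ℝ) + 1)⁻¹
  else 0

namespace APA

open Finset Filter Topology

noncomputable def F (ξ : Strategy) (n : ℕ) : ℝ := ∑ k ∈ Finset.range n, ξ.p k

noncomputable def mid (ξ : Strategy) (n : ℕ) : ℝ := F ξ n + ξ.p n / 2

lemma summable_p (ξ : Strategy) : Summable ξ.p := ξ.total.summable

lemma tsum_p (ξ : Strategy) : ∑' n, ξ.p n = 1 := ξ.total.tsum_eq

lemma F_succ (ξ : Strategy) (n : ℕ) : F ξ (n + 1) = F ξ n + ξ.p n :=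
  Finset.sum_range_succ _ n

lemma F_nonneg (ξ : Strategy) (n : ℕ) : 0 ≤ F ξ n :=
  Finset.sum_nonneg fun k _ => ξ.nonneg k

lemma F_le_one (ξ : Strategy) (n : ℕ) : F ξ n ≤ 1 := by
  have h := Summable.sum_le_tsum (Finset.range n) (fun k _ => ξ.nonneg k) (summable_p ξ)
  rwa [tsum_p] at h

lemma p_le_one (ξ : Strategy) (n : ℕ) : ξ.p n ≤ 1 := by
  have h := Summable.le_tsum (summable_p ξ) n (fun j _ => ξ.nonneg j)
  rwa [tsum_p] at h

lemma mid_nonneg (ξ : Strategy) (n : ℕ) : 0 ≤ mid ξ n := by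
  have := F_nonneg ξ n; have := ξ.nonneg n; unfold mid; linarith

lemma mid_le_one (ξ : Strategy) (n : ℕ) : mid ξ n ≤ 1 := by
  have h := F_le_one ξ (n + 1)
  rw [F_succ] at h
  have := ξ.nonneg n; unfold mid; linarith

lemma summable_pF (ξ η : Strategy) : Summable fun n => ξ.p n * F η n :=
  Summable.of_nonneg_of_le (fun n => mul_nonneg (ξ.nonneg n) (F_nonneg η n))
    (fun n => mul_le_of_le_one_right (ξ.nonneg n) (F_le_one η n)) (summable_p ξ)

lemma summable_pp (ξ η : Strategy) : Summable fun n => ξ.p n * η.p n :=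
  Summable.of_nonneg_of_le (fun n => mul_nonneg (ξ.nonneg n) (η.nonneg n))
    (fun n => mul_le_of_le_one_right (ξ.nonneg n) (p_le_one η n)) (summable_p ξ)

lemma summable_pmid (ξ η : Strategy) : Summable fun n => ξ.p n * mid η n :=
  Summable.of_nonneg_of_le (fun n => mul_nonneg (ξ.nonneg n) (mid_nonneg η n))
    (fun n => mul_le_of_le_one_right (ξ.nonneg n) (mid_le_one η n)) (summable_p ξ)

lemma summable_pn (ξ : Strategy) : Summable fun n => ξ.p n * (n : ℝ) := by
  have h : (fun n => ξ.p n * (n : ℝ)) = fun n : ℕ => (n : ℝ) * ξ.p n := by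
    funext n; ring
  rw [h]; exact ξ.finExp

lemma summable_weight (v : ℝ) (ξ η : Strategy) :
    Summable fun n => ξ.p n * (v * mid η n - n) := by
  have h : (fun n => ξ.p n * (v * mid η n - n))
      = fun n => v * (ξ.p n * mid η n) - ξ.p n * (n : ℝ) := by
    funext n; ring
  rw [h]; exact ((summable_pmid ξ η).mul_left v).sub (summable_pn ξ)

lemma payoff_eq (v : ℝ) (ξ η : Strategy) :
    payoff v ξ η = ∑' n, ξ.p n * (v * mid η n - n) := by
  have e : ∀ n : ℕ, ξ.p n * (v * mid η n - n)
      = (v * (ξ.p n * F η n) + v / 2 * (ξ.p n * η.p n)) - (n : ℝ) * ξ.p n := by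
    intro n; unfold mid; ring
  have hs1 : Summable fun n => v * (ξ.p n * F η n) := (summable_pF ξ η).mul_left v
  have hs2 : Summable fun n => v / 2 * (ξ.p n * η.p n) := (summable_pp ξ η).mul_left _
  rw [tsum_congr e, Summable.tsum_sub (hs1.add hs2) ξ.finExp, Summable.tsum_add hs1 hs2,
    tsum_mul_left, tsum_mul_left]
  rfl

end APA
namespace APA

open Finset Filter Topology

noncomputable def dS (j : ℕ) : Strategy where
  p := deltaFn j
  nonneg := fun n => by unfold deltaFn; split <;> norm_num
  total := by
    have h := hasSum_single (f := deltaFn j) j (fun b' hb => if_neg hb)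
    simpa [deltaFn] using h
  finExp := by
    apply summable_of_ne_finset_zero (s := {j})
    intro n hn
    simp only [Finset.mem_singleton] at hn
    simp [deltaFn, hn]

lemma payoff_dS (v : ℝ) (j : ℕ) (η : Strategy) :
    payoff v (dS j) η = v * mid η j - j := by
  rw [payoff_eq]
  rw [tsum_eq_single j (fun n hn => by simp [dS, deltaFn, hn])]
  simp [dS, deltaFn]

lemma le_payoff_of_nash {v : ℝ} {ξ η : Strategy}
    (h : ∀ ξ' : Strategy, payoff v ξ' η ≤ payoff v ξ η) (n : ℕ) :
    v * mid η n - n ≤ payoff v ξ η := by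
  simpa [payoff_dS] using h (dS n)

lemma support_eq_of_nash {v : ℝ} {ξ η : Strategy}
    (h : ∀ ξ' : Strategy, payoff v ξ' η ≤ payoff v ξ η) {n : ℕ} (hn : ξ.p n ≠ 0) :
    v * mid η n - n = payoff v ξ η := by
  set P := payoff v ξ η with hP
  set f : ℕ → ℝ := fun k => ξ.p k * (P - (v * mid η k - k)) with hf
  have hf0 : ∀ k, 0 ≤ f k := fun k =>
    mul_nonneg (ξ.nonneg k) (by have := le_payoff_of_nash h k; linarith)
  have hsum : Summable f := by
    have e : f = fun k => ξ.p k * P - ξ.p k * (v * mid η k - k) := by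
      funext k; simp only [hf]; ring
    rw [e]; exact ((summable_p ξ).mul_right P).sub (summable_weight v ξ η)
  have htot : ∑' k, f k = 0 := by
    have e : f = fun k => ξ.p k * P - ξ.p k * (v * mid η k - k) := by
      funext k; simp only [hf]; ring
    rw [e, Summable.tsum_sub ((summable_p ξ).mul_right P) (summable_weight v ξ η),
      tsum_mul_right, tsum_p, ← payoff_eq]
    simp [hP]
  have hle := Summable.le_tsum hsum n (fun j _ => hf0 j)
  rw [htot] at hle
  have hfn : f n = 0 := le_antisymm hle (hf0 n)
  have hpn : 0 < ξ.p n := lt_of_le_of_ne (ξ.nonneg n) (Ne.symm hn)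
  have := mul_eq_zero.mp hfn
  rcases this with h1 | h2
  · exact absurd h1 hn
  · linarith

lemma payoff_le_of_le {v c : ℝ} {η : Strategy}
    (hle : ∀ n : ℕ, v * mid η n - n ≤ c) (ξ : Strategy) : payoff v ξ η ≤ c := by
  rw [payoff_eq]
  calc ∑' n, ξ.p n * (v * mid η n - n) ≤ ∑' n, ξ.p n * c :=
        Summable.tsum_le_tsum (fun n => mul_le_mul_of_nonneg_left (hle n) (ξ.nonneg n))
          (summable_weight v ξ η) ((summable_p ξ).mul_right c)
    _ = c := by rw [tsum_mul_right, tsum_p, one_mul]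

lemma payoff_eq_of {v c : ℝ} {η ξ : Strategy}
    (heq : ∀ n : ℕ, ξ.p n ≠ 0 → v * mid η n - n = c) : payoff v ξ η = c := by
  rw [payoff_eq]
  have e : ∀ n : ℕ, ξ.p n * (v * mid η n - n) = ξ.p n * c := by
    intro n
    by_cases h : ξ.p n = 0
    · simp [h]
    · rw [heq n h]
  rw [tsum_congr e, tsum_mul_right, tsum_p, one_mul]

end APA
namespace APA

open Finset Filter Topology

lemma sq_partial (ξ : Strategy) (K : ℕ) :
    ∑ n ∈ Finset.range K, (2 * (ξ.p n * F ξ n) + ξ.p n * ξ.p n) = F ξ K ^ 2 := by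
  induction K with
  | zero => simp [F]
  | succ k ih => rw [Finset.sum_range_succ, ih, F_succ]; ring

lemma self_identity (ξ : Strategy) :
    2 * (∑' n, ξ.p n * F ξ n) + ∑' n, ξ.p n * ξ.p n = 1 := by
  have hs1 := summable_pF ξ ξ
  have hs2 := summable_pp ξ ξ
  have hsum : Summable fun n => 2 * (ξ.p n * F ξ n) + ξ.p n * ξ.p n :=
    (hs1.mul_left 2).add hs2
  have h1 : Tendsto (fun K => ∑ n ∈ Finset.range K, (2 * (ξ.p n * F ξ n) + ξ.p n * ξ.p n))
      atTop (nhds (∑' n, (2 * (ξ.p n * F ξ n) + ξ.p n * ξ.p n))) :=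
    hsum.hasSum.tendsto_sum_nat
  have hF : Tendsto (fun K => F ξ K) atTop (nhds 1) := ξ.total.tendsto_sum_nat
  have h2 : Tendsto (fun K => F ξ K ^ 2) atTop (nhds 1) := by
    have := hF.pow 2
    simpa using this
  have key : ∑' n, (2 * (ξ.p n * F ξ n) + ξ.p n * ξ.p n) = 1 := by
    apply tendsto_nhds_unique _ h2
    have e : (fun K => ∑ n ∈ Finset.range K, (2 * (ξ.p n * F ξ n) + ξ.p n * ξ.p n))
        = fun K => F ξ K ^ 2 := by
      funext K; exact sq_partial ξ K
    rw [← e]; exact h1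
  rw [Summable.tsum_add (hs1.mul_left 2) hs2, tsum_mul_left] at key
  linarith

lemma exp_ge (ξ : Strategy) : 1 - ξ.p 0 ≤ ξ.exp := by
  have h := Summable.tsum_eq_add_tsum_ite (summable_p ξ) 0
  rw [tsum_p] at h
  have hg : Summable fun n : ℕ => if n = 0 then 0 else ξ.p n := by
    apply Summable.of_nonneg_of_le (fun n => ?_) (fun n => ?_) (summable_p ξ)
    · split <;> [rfl; exact ξ.nonneg n]
    · split <;> [exact ξ.nonneg n; rfl]
  have hle : ∀ n : ℕ, (if n = 0 then 0 else ξ.p n) ≤ (n : ℝ) * ξ.p n := by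
    intro n
    rcases n with _ | m
    · simp
    · simp only [Nat.succ_ne_zero, if_false]
      have h1 : (1 : ℝ) ≤ ((m : ℝ) + 1) := by
        have := Nat.cast_nonneg (α := ℝ) m; linarith
      have := ξ.nonneg (m + 1)
      push_cast
      nlinarith
  have := Summable.tsum_le_tsum hle hg ξ.finExp
  have hexp : ξ.exp = ∑' n : ℕ, (n : ℝ) * ξ.p n := rfl
  linarith [h, this, hexp ▸ this]

lemma total_eq_sum (ξ : Strategy) {K : ℕ} (h : ∀ k, K ≤ k → ξ.p k = 0) :
    ∑ k ∈ Finset.range K, ξ.p k = 1 := by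
  have := tsum_eq_sum (L := SummationFilter.unconditional ℕ) (s := Finset.range K) (f := ξ.p)
    (fun b hb => h b (by simpa using Finset.mem_range.not.mp hb))
  rw [tsum_p] at this
  exact this.symm

lemma exp_eq_sum (ξ : Strategy) {K : ℕ} (h : ∀ k, K ≤ k → ξ.p k = 0) :
    ∑ k ∈ Finset.range K, (k : ℝ) * ξ.p k = ξ.exp := by
  have := tsum_eq_sum (L := SummationFilter.unconditional ℕ) (s := Finset.range K) (f := fun k : ℕ => (k : ℝ) * ξ.p k)
    (fun b hb => by simp [h b (by simpa using Finset.mem_range.not.mp hb)])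
  exact this.symm

lemma F_eq_one_of (ξ : Strategy) {K : ℕ} (h : ∀ k, K ≤ k → ξ.p k = 0)
    {n : ℕ} (hn : K ≤ n) : F ξ n = 1 := by
  have := tsum_eq_sum (L := SummationFilter.unconditional ℕ) (s := Finset.range n) (f := ξ.p)
    (fun b hb => h b (le_trans hn (by simpa using Finset.mem_range.not.mp hb)))
  rw [tsum_p] at this
  exact this.symm

lemma eq_delta_of (ξ : Strategy) (h1 : ξ.exp = 1) (h0 : ξ.p 0 = 0) :
    ∀ n, ξ.p n = deltaFn 1 n := by
  have hs : Summable fun n : ℕ => ((n : ℝ) - 1) * ξ.p n := by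
    have e : (fun n : ℕ => ((n : ℝ) - 1) * ξ.p n)
        = fun n : ℕ => (n : ℝ) * ξ.p n - ξ.p n := by funext n; ring
    rw [e]; exact ξ.finExp.sub (summable_p ξ)
  have ht : ∑' n : ℕ, ((n : ℝ) - 1) * ξ.p n = 0 := by
    have e : (fun n : ℕ => ((n : ℝ) - 1) * ξ.p n)
        = fun n : ℕ => (n : ℝ) * ξ.p n - ξ.p n := by funext n; ring
    rw [e, Summable.tsum_sub ξ.finExp (summable_p ξ), tsum_p]
    have : ∑' n : ℕ, (n : ℝ) * ξ.p n = 1 := h1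
    rw [this]; ring
  have hnn : ∀ k : ℕ, 0 ≤ ((k : ℝ) - 1) * ξ.p k := by
    intro k
    rcases k with _ | m
    · simp [h0]
    · have h1' : (0 : ℝ) ≤ (m : ℝ) := Nat.cast_nonneg m
      have := ξ.nonneg (m + 1)
      push_cast
      nlinarith
  have hzero : ∀ k : ℕ, ((k : ℝ) - 1) * ξ.p k = 0 := by
    intro k
    have := Summable.le_tsum hs k (fun j _ => hnn j)
    rw [ht] at this
    exact le_antisymm this (hnn k)
  have h2 : ∀ n, 2 ≤ n → ξ.p n = 0 := by
    intro n hn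
    have := hzero n
    rcases mul_eq_zero.mp this with h | h
    · exfalso
      have : (2 : ℝ) ≤ (n : ℝ) := by exact_mod_cast hn
      linarith
    · exact h
  have hz : ∀ n, n ≠ 1 → ξ.p n = 0 := by
    intro n hn
    rcases n with _ | _ | m
    · exact h0
    · exact absurd rfl hn
    · exact h2 _ (by omega)
  have hp1 : ξ.p 1 = 1 := by
    have := tsum_eq_sum (L := SummationFilter.unconditional ℕ) (s := {1}) (f := ξ.p)
      (fun b hb => hz b (by simpa using hb))
    rw [tsum_p] at this
    simpa using this.symm
  intro n
  by_cases h : n = 1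
  · subst h; simp [deltaFn, hp1]
  · rw [hz n h]; simp [deltaFn, h]

end APA
namespace APA

lemma mid0 (ξ : Strategy) : mid ξ 0 = ξ.p 0 / 2 := by
  simp [mid, F]

lemma mid1 (ξ : Strategy) : mid ξ 1 = ξ.p 0 + ξ.p 1 / 2 := by
  simp [mid, F, Finset.sum_range_one]

lemma mid2 (ξ : Strategy) : mid ξ 2 = ξ.p 0 + ξ.p 1 + ξ.p 2 / 2 := by
  simp [mid, F, Finset.sum_range_succ, Finset.sum_range_one]

lemma mid_eq_one (ξ : Strategy) {K n : ℕ} (h : ∀ k, K ≤ k → ξ.p k = 0)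
    (hn : K ≤ n) : mid ξ n = 1 := by
  unfold mid
  rw [F_eq_one_of ξ h hn, h n hn]
  ring

end APA
set_option maxHeartbeats 4000000 in
/-- Proposition 7.1: equilibria with `E(X) = 1`, `E(Y) = b ∈ (0,1)`. -/
theorem allpay_eq_exp_one_b (v1 v2 b : ℝ) (hv1 : 0 < v1) (hv2 : 0 < v2)
    (hb0 : 0 < b) (hb1 : b < 1) (X Y : Strategy)
    (hX : X.exp = 1) (hY : Y.exp = b) :
    (IsNashAPA v1 v2 X Y ↔
      (v2 = 2 ∧ v2 ≤ v1 ∧ b ≤ 4 / v1 ∧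
       (∀ n, X.p n = UO 1 n) ∧
       ∃ lmb : ℝ, 0 ≤ lmb ∧ lmb ≤ 1 ∧
         4 / (b * v1) - 2 / b + 1 ≤ lmb ∧ lmb ≤ 4 / (b * v1) - 1 ∧
         (∀ n, Y.p n = (1 - b) * deltaFn 0 n +
            b * (lmb * UO 1 n + (1 - lmb) * UE 1 n)))) ∧
    (IsNashAPA v1 v2 X Y →
      payoff v1 X Y = v1 / 2 * (2 - b) - 1 ∧ payoff v2 Y X = 0) := by
  classical
  have hUO : ∀ n, UO 1 n = deltaFn 1 n := by
    intro n
    unfold UO deltaFn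
    rcases n with _ | _ | m
    · norm_num
    · norm_num
    · have h1 : ¬(m + 1 + 1 < 2 * 1) := by omega
      have h2 : ¬(m + 1 + 1 = 1) := by omega
      simp [h1, h2]
  have hc0b : 1 - b ≤ Y.p 0 := by
    have := APA.exp_ge Y; rw [hY] at this; linarith
  have hc0pos : 0 < Y.p 0 := by linarith
  have hc0ne : Y.p 0 ≠ 0 := ne_of_gt hc0pos
  have forward : IsNashAPA v1 v2 X Y →
      (v2 = 2 ∧ v2 ≤ v1 ∧ b ≤ 4 / v1 ∧
       (∀ n, X.p n = UO 1 n) ∧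
       ∃ lmb : ℝ, 0 ≤ lmb ∧ lmb ≤ 1 ∧
         4 / (b * v1) - 2 / b + 1 ≤ lmb ∧ lmb ≤ 4 / (b * v1) - 1 ∧
         (∀ n, Y.p n = (1 - b) * deltaFn 0 n +
            b * (lmb * UO 1 n + (1 - lmb) * UE 1 n))) := by
    intro hN
    obtain ⟨hNX, hNY⟩ := hN
    -- Step A : X.p 0 = 0
    have hX0 : X.p 0 = 0 := by
      by_contra ha0
      have ha0pos : 0 < X.p 0 := lt_of_le_of_ne (X.nonneg 0) (Ne.symm ha0)
      have hP1 : payoff v1 X Y = v1 * (Y.p 0 / 2) := by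
        have h := APA.support_eq_of_nash hNX ha0
        rw [APA.mid0] at h
        simpa using h.symm
      have hb1' := APA.le_payoff_of_nash hNX 1
      rw [APA.mid1, hP1] at hb1'
      have h3 : v1 * (Y.p 0 + Y.p 1) ≤ 2 := by push_cast at hb1'; nlinarith
      -- h4 : v1 * (1 - Y.p 0) ≤ 2 * b
      have hYY := hNX Y
      have hid := APA.self_identity Y
      have hpay : payoff v1 Y Y = v1 / 2 - b := by
        unfold payoff
        rw [hY]
        have e1 : prGT Y Y = ∑' n, Y.p n * APA.F Y n := rfl
        have e2 : prEq Y Y = ∑' n, Y.p n * Y.p n := rfl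
        rw [e1, e2]
        nlinarith [hid]
      rw [hpay, hP1] at hYY
      have h4 : v1 * (1 - Y.p 0) ≤ 2 * b := by nlinarith
      -- support of X inside {0,1,2}
      have hsuppX : ∀ n, X.p n ≠ 0 → n < 3 := by
        intro n hn
        have heq := APA.support_eq_of_nash hNX hn
        have hm := APA.mid_le_one Y n
        rw [hP1] at heq
        have hcast : (n : ℝ) < 3 := by nlinarith [Y.nonneg 1, hv1]
        exact_mod_cast hcast
      have ha3 : ∀ k, 3 ≤ k → X.p k = 0 := by
        intro k hk
        by_contra h
        have := hsuppX k h; omega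
      have hXsum : X.p 0 + X.p 1 + X.p 2 = 1 := by
        have := APA.total_eq_sum X ha3
        simp [Finset.sum_range_succ, Finset.sum_range_one] at this
        linarith
      have hXexp : X.p 1 + 2 * X.p 2 = 1 := by
        have := APA.exp_eq_sum X ha3
        rw [hX] at this
        simp [Finset.sum_range_succ, Finset.sum_range_one] at this
        linarith
      have ha2 : X.p 2 = X.p 0 := by linarith
      have ha2ne : X.p 2 ≠ 0 := by rw [ha2]; exact ha0
      have heq2 := APA.support_eq_of_nash hNX ha2ne
      rw [APA.mid2, hP1] at heq2
      have hc2 : Y.p 0 ≤ Y.p 2 := by push_cast at heq2; nlinarith [Y.nonneg 1]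
      -- support of Y inside {0,1,2,3}
      have hsuppY : ∀ m, Y.p m ≠ 0 → m < 4 := by
        intro m hm
        by_contra hge
        push_neg at hge
        obtain ⟨m', rfl⟩ : ∃ m', m = m' + 1 := ⟨m - 1, by omega⟩
        have heqm := APA.support_eq_of_nash hNY hm
        have hlem := APA.le_payoff_of_nash hNY m'
        have e1 : X.p m' = 0 := ha3 _ (by omega)
        have e2 : X.p (m' + 1) = 0 := ha3 _ (by omega)
        have hmm : APA.mid X (m' + 1) = APA.mid X m' := by
          unfold APA.mid
          rw [APA.F_succ, e1, e2]
          ring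
        rw [hmm] at heqm
        push_cast at heqm hlem
        linarith
      have hc4 : ∀ k, 4 ≤ k → Y.p k = 0 := by
        intro k hk
        by_contra h
        have := hsuppY k h; omega
      have hYsum : Y.p 0 + Y.p 1 + Y.p 2 + Y.p 3 = 1 := by
        have := APA.total_eq_sum Y hc4
        simp [Finset.sum_range_succ, Finset.sum_range_one] at this
        linarith
      have hYexp : Y.p 1 + 2 * Y.p 2 + 3 * Y.p 3 = b := by
        have := APA.exp_eq_sum Y hc4
        rw [hY] at this
        simp [Finset.sum_range_succ, Finset.sum_range_one] at this
        push_cast at this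
        linarith
      have := Y.nonneg 3
      linarith
    -- X is the point mass at 1
    have hXd' : ∀ n, X.p n = deltaFn 1 n := APA.eq_delta_of X hX hX0
    have hXd : ∀ n, X.p n = UO 1 n := fun n => by rw [hXd' n, hUO n]
    have hXz : ∀ k, 2 ≤ k → X.p k = 0 := by
      intro k hk
      rw [hXd' k]
      unfold deltaFn
      have : ¬(k = 1) := by omega
      simp [this]
    have hX1 : X.p 1 = 1 := by rw [hXd' 1]; simp [deltaFn]
    have hmidX0 : APA.mid X 0 = 0 := by rw [APA.mid0, hX0]; ring
    have hmidX1 : APA.mid X 1 = 1 / 2 := by rw [APA.mid1, hX0, hX1]; ring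
    have hmidXge : ∀ n, 2 ≤ n → APA.mid X n = 1 := fun n hn => APA.mid_eq_one X hXz hn
    -- payoff of player 2 is 0
    have hP2 : payoff v2 Y X = 0 := by
      have h := APA.support_eq_of_nash hNY hc0ne
      rw [hmidX0] at h
      simpa using h.symm
    -- v2 = 2
    have hmex : ∃ m, 1 ≤ m ∧ Y.p m ≠ 0 := by
      by_contra h
      push_neg at h
      have : Y.exp = 0 := by
        have e : ∀ n : ℕ, (n : ℝ) * Y.p n = 0 := by
          intro n
          rcases n with _ | n
          · simp
          · rw [h (n + 1) (by omega)]; ring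
        have : Y.exp = ∑' n : ℕ, (n : ℝ) * Y.p n := rfl
        rw [this, tsum_congr e]
        simp
      rw [hY] at this
      linarith
    obtain ⟨m, hm1, hmne⟩ := hmex
    have hv2le : v2 ≤ 2 := by
      have h := APA.le_payoff_of_nash hNY 2
      rw [hmidXge 2 le_rfl, hP2] at h
      push_cast at h
      linarith
    have hv2eq : v2 = 2 := by
      have heqm := APA.support_eq_of_nash hNY hmne
      rw [hP2] at heqm
      rcases eq_or_lt_of_le hm1 with h1 | h1
      · rw [← h1, hmidX1] at heqm
        push_cast at heqm
        linarith
      · have h2 : 2 ≤ m := h1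
        rw [hmidXge m h2] at heqm
        have : (2 : ℝ) ≤ (m : ℝ) := by exact_mod_cast h2
        linarith
    -- support of Y inside {0,1,2}
    have hYz : ∀ k, 3 ≤ k → Y.p k = 0 := by
      intro k hk
      by_contra h
      have heqk := APA.support_eq_of_nash hNY h
      rw [hP2, hmidXge k (by omega), hv2eq] at heqk
      have : (3 : ℝ) ≤ (k : ℝ) := by exact_mod_cast hk
      linarith
    have hYsum : Y.p 0 + Y.p 1 + Y.p 2 = 1 := by
      have := APA.total_eq_sum Y hYz
      simp [Finset.sum_range_succ, Finset.sum_range_one] at this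
      linarith
    have hYexp : Y.p 1 + 2 * Y.p 2 = b := by
      have := APA.exp_eq_sum Y hYz
      rw [hY] at this
      simp [Finset.sum_range_succ, Finset.sum_range_one] at this
      push_cast at this
      linarith
    -- the X-side first-order conditions
    have hX1ne : X.p 1 ≠ 0 := by rw [hX1]; norm_num
    have heq1 := APA.support_eq_of_nash hNX hX1ne
    have hge0 := APA.le_payoff_of_nash hNX 0
    have hge2 := APA.le_payoff_of_nash hNX 2
    rw [← heq1] at hge0 hge2
    rw [APA.mid1] at heq1 hge0 hge2
    rw [APA.mid0] at hge0
    rw [APA.mid2] at hge2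
    push_cast at hge0 hge2
    have hL1 : 2 ≤ v1 * (Y.p 0 + Y.p 1) := by nlinarith [hge0]
    have hL2 : v1 * (Y.p 1 + Y.p 2) ≤ 2 := by nlinarith [hge2]
    have hp1 := Y.nonneg 1
    have hp2 := Y.nonneg 2
    clear hNX hNY heq1 hge0 hge2 hmidX0 hmidX1 hmidXge hX0 hXd' hXz hX1 hX1ne hv2le hm1 hmne hP2
    refine ⟨hv2eq, ?_, ?_, hXd, Y.p 1 / b, ?_, ?_, ?_, ?_, ?_⟩
    · -- v2 ≤ v1
      rw [hv2eq]
      nlinarith [hL1, hYsum, hp2, hv1]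
    · -- b ≤ 4 / v1
      rw [le_div_iff₀ hv1]
      nlinarith [hL2, hYexp, hp1, hv1]
    · exact div_nonneg hp1 hb0.le
    · rw [div_le_one hb0]
      linarith
    · -- lower bound for lambda
      have h4v1 : 4 / v1 ≤ 2 - b + Y.p 1 := by
        rw [div_le_iff₀ hv1]
        nlinarith [hL1, hYsum, hYexp]
      have e : 4 / (b * v1) - 2 / b + 1 = (4 / v1 - 2 + b) / b := by
        field_simp
      rw [e, div_le_div_iff_of_pos_right hb0]
      linarith
    · -- upper bound for lambda
      have h4v1 : b + Y.p 1 ≤ 4 / v1 := by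
        rw [le_div_iff₀ hv1]
        nlinarith [hL2, hYexp]
      have e : 4 / (b * v1) - 1 = (4 / v1 - b) / b := by
        field_simp
      rw [e, div_le_div_iff_of_pos_right hb0]
      linarith
    · -- the explicit form of Y
      intro n
      have h2' : Y.p 2 = (b - Y.p 1) / 2 := by linarith
      rcases n with _ | _ | _ | k
      · have hd : deltaFn 0 0 = 1 := by simp [deltaFn]
        have h1 : UO 1 0 = 0 := by simp [UO]
        have h2 : UE 1 0 = 2⁻¹ := by norm_num [UE]
        rw [hd, h1, h2]
        have h0' : Y.p 0 = 1 - b / 2 - Y.p 1 / 2 := by linarith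
        rw [h0']
        field_simp
        ring
      · have hd : deltaFn 0 1 = 0 := by simp [deltaFn]
        have h1 : UO 1 1 = 1 := by norm_num [UO]
        have h2 : UE 1 1 = 0 := by simp [UE, Nat.even_iff]
        rw [hd, h1, h2]
        field_simp
        ring
      · have hd : deltaFn 0 2 = 0 := by simp [deltaFn]
        have h1 : UO 1 2 = 0 := by simp [UO, Nat.odd_iff]
        have h2 : UE 1 2 = 2⁻¹ := by norm_num [UE]
        rw [hd, h1, h2, h2']
        field_simp
        ring
      · have h0 : deltaFn 0 (k + 3) = 0 := by simp [deltaFn]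
        have h1 : UO 1 (k + 3) = 0 := by
          have hlt : ¬(k + 3 < 2 * 1) := by omega
          simp [UO, hlt]
        have h2 : UE 1 (k + 3) = 0 := by
          have hle : ¬(k + 3 ≤ 2 * 1) := by omega
          simp [UE, hle]
        rw [h0, h1, h2, hYz (k + 3) (by omega)]
        ring
  have hXfacts : (∀ n, X.p n = UO 1 n) →
      X.p 0 = 0 ∧ X.p 1 = 1 ∧ (∀ k, 2 ≤ k → X.p k = 0) := by
    intro hXd
    have hXd' : ∀ n, X.p n = deltaFn 1 n := fun n => by rw [hXd n, hUO n]
    refine ⟨by rw [hXd' 0]; simp [deltaFn], by rw [hXd' 1]; simp [deltaFn], ?_⟩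
    intro k hk
    rw [hXd' k]
    unfold deltaFn
    have : ¬(k = 1) := by omega
    simp [this]
  have hYfacts : ∀ lmb : ℝ,
      (∀ n, Y.p n = (1 - b) * deltaFn 0 n + b * (lmb * UO 1 n + (1 - lmb) * UE 1 n)) →
      Y.p 0 = 1 - b + b * (1 - lmb) / 2 ∧ Y.p 1 = b * lmb ∧
        Y.p 2 = b * (1 - lmb) / 2 ∧ (∀ k, 3 ≤ k → Y.p k = 0) := by
    intro lmb hYf
    refine ⟨?_, ?_, ?_, ?_⟩
    · have h := hYf 0
      have hd : deltaFn 0 0 = 1 := by simp [deltaFn]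
      have h1 : UO 1 0 = 0 := by simp [UO]
      have h2 : UE 1 0 = 2⁻¹ := by norm_num [UE]
      rw [hd, h1, h2] at h
      rw [h]; ring
    · have h := hYf 1
      have hd : deltaFn 0 1 = 0 := by simp [deltaFn]
      have h1 : UO 1 1 = 1 := by norm_num [UO]
      have h2 : UE 1 1 = 0 := by simp [UE, Nat.even_iff]
      rw [hd, h1, h2] at h
      rw [h]; ring
    · have h := hYf 2
      have hd : deltaFn 0 2 = 0 := by simp [deltaFn]
      have h1 : UO 1 2 = 0 := by simp [UO, Nat.odd_iff]
      have h2 : UE 1 2 = 2⁻¹ := by norm_num [UE]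
      rw [hd, h1, h2] at h
      rw [h]; ring
    · intro k hk
      obtain ⟨j, rfl⟩ : ∃ j, k = j + 3 := ⟨k - 3, by omega⟩
      have h := hYf (j + 3)
      have h0 : deltaFn 0 (j + 3) = 0 := by simp [deltaFn]
      have h1 : UO 1 (j + 3) = 0 := by
        have hlt : ¬(j + 3 < 2 * 1) := by omega
        simp [UO, hlt]
      have h2 : UE 1 (j + 3) = 0 := by
        have hle : ¬(j + 3 ≤ 2 * 1) := by omega
        simp [UE, hle]
      rw [h0, h1, h2] at h
      rw [h]; ring
  have backward : (v2 = 2 ∧ v2 ≤ v1 ∧ b ≤ 4 / v1 ∧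
       (∀ n, X.p n = UO 1 n) ∧
       ∃ lmb : ℝ, 0 ≤ lmb ∧ lmb ≤ 1 ∧
         4 / (b * v1) - 2 / b + 1 ≤ lmb ∧ lmb ≤ 4 / (b * v1) - 1 ∧
         (∀ n, Y.p n = (1 - b) * deltaFn 0 n +
            b * (lmb * UO 1 n + (1 - lmb) * UE 1 n))) →
      IsNashAPA v1 v2 X Y := by
    rintro ⟨hv2e, hv21, hb4, hXd, lmb, hl0, hl1, hllb, hlub, hYf⟩
    obtain ⟨hX0, hX1, hXz⟩ := hXfacts hXd
    obtain ⟨hc0, hc1, hc2, hYz⟩ := hYfacts lmb hYf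
    have hbv : (0 : ℝ) < b * v1 := by positivity
    have hbv4 : b * v1 ≤ 4 := by rwa [le_div_iff₀ hv1] at hb4
    have hK1 : 4 - 2 * v1 + b * v1 ≤ b * v1 * lmb := by
      have h := mul_le_mul_of_nonneg_right hllb hbv.le
      have e : (4 / (b * v1) - 2 / b + 1) * (b * v1) = 4 - 2 * v1 + b * v1 := by
        field_simp
      rw [e] at h
      nlinarith [h]
    have hK2 : b * v1 * (1 + lmb) ≤ 4 := by
      have h := mul_le_mul_of_nonneg_right hlub hbv.le
      have e : (4 / (b * v1) - 1) * (b * v1) = 4 - b * v1 := by field_simp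
      rw [e] at h
      nlinarith [h]
    have hle1 : ∀ n : ℕ, v1 * APA.mid Y n - n ≤ v1 * APA.mid Y 1 - 1 := by
      intro n
      rcases n with _ | _ | _ | k
      · rw [APA.mid0, APA.mid1, hc0, hc1]
        push_cast
        nlinarith [hK1]
      · push_cast
        norm_num
      · rw [APA.mid2, APA.mid1, hc0, hc1, hc2]
        push_cast
        nlinarith [hK2]
      · rw [APA.mid_eq_one Y hYz (by omega : 3 ≤ k + 3), APA.mid1, hc0, hc1]
        push_cast
        nlinarith [hbv4, Nat.cast_nonneg (α := ℝ) k]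
    have hmidX0 : APA.mid X 0 = 0 := by rw [APA.mid0, hX0]; ring
    have hmidX1 : APA.mid X 1 = 1 / 2 := by rw [APA.mid1, hX0, hX1]; ring
    have hmidXge : ∀ n, 2 ≤ n → APA.mid X n = 1 := fun n hn => APA.mid_eq_one X hXz hn
    have hle2 : ∀ n : ℕ, v2 * APA.mid X n - n ≤ 0 := by
      intro n
      rcases n with _ | _ | m
      · rw [hmidX0]
        norm_num
      · rw [hmidX1, hv2e]
        norm_num
      · rw [hmidXge (m + 2) (by omega), hv2e]
        push_cast
        linarith [Nat.cast_nonneg (α := ℝ) m]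
    constructor
    · intro X'
      have hPX : payoff v1 X Y = v1 * APA.mid Y 1 - 1 := by
        apply APA.payoff_eq_of
        intro n hn
        have hn1 : n = 1 := by
          by_contra h
          rcases Nat.lt_or_ge n 2 with h2 | h2
          · interval_cases n
            · exact hn hX0
            · exact h rfl
          · exact hn (hXz n h2)
        subst hn1
        norm_num
      rw [hPX]
      exact APA.payoff_le_of_le hle1 X'
    · intro Y'
      have hPY : payoff v2 Y X = 0 := by
        apply APA.payoff_eq_of
        intro n hn
        have hn3 : n < 3 := by
          by_contra h
          push_neg at h
          exact hn (hYz n h)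
        interval_cases n
        · rw [hmidX0]
          norm_num
        · rw [hmidX1, hv2e]
          norm_num
        · rw [hmidXge 2 le_rfl, hv2e]
          norm_num
      rw [hPY]
      exact APA.payoff_le_of_le hle2 Y'
  refine ⟨⟨forward, backward⟩, ?_⟩
  intro hN
  obtain ⟨hv2e, hv21, hb4, hXd, lmb, hl0, hl1, hllb, hlub, hYf⟩ := forward hN
  obtain ⟨hNX, hNY⟩ := hN
  obtain ⟨hX0, hX1, hXz⟩ := hXfacts hXd
  obtain ⟨hc0, hc1, hc2, hYz⟩ := hYfacts lmb hYf
  constructor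
  · have hX1ne : X.p 1 ≠ 0 := by rw [hX1]; norm_num
    have heq1 := APA.support_eq_of_nash hNX hX1ne
    rw [APA.mid1] at heq1
    rw [← heq1, hc0, hc1]
    push_cast
    ring
  · have h := APA.support_eq_of_nash hNY hc0ne
    have hmidX0 : APA.mid X 0 = 0 := by rw [APA.mid0, hX0]; ring
    rw [hmidX0] at h
    simpa using h.symm
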